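/- Let n, σ, m be positive integers with σ ≤ n-1 and n-1 ≤ m ≤ nσ. The cardinality of the set of pairs (O, I), where O is an n×σ binary matrix with m ones and no all-zero column, and I ∈ {0,1}^m has exactly n-1 ones and satisfies I_{1+∑_{k=1}^{j-1}‖O_k‖} = 1 for all j ∈ [σ], equals C(m-σ, n-σ-1) · ∑_{j=0}^{σ} (-1)^j C(σ,j) C(n(σ-j), m). -/

import Mathlib

open Finset

private lemma count_forced {m : ℕ} (t : ℕ) (S : Finset (Fin m)) (hst : S.card ≤ t) :
    (univ.filter (fun I : Fin m → Bool =>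
        (univ.filter (fun i => I i = true)).card = t ∧ ∀ i ∈ S, I i = true)).card
      = (m - S.card).choose (t - S.card) := by
  have hcompl : Sᶜ.card = m - S.card := by
    rw [card_compl, Fintype.card_fin]
  rw [← hcompl, ← card_powersetCard]
  apply card_nbij' (i := fun I => (univ.filter (fun i => I i = true)) \ S)
    (j := fun U i => decide (i ∈ U ∪ S))
  · intro I hI
    obtain ⟨-, hc, hS⟩ := mem_filter.1 hI
    have hsub : S ⊆ univ.filter (fun i => I i = true) := fun i hi =>
      mem_filter.2 ⟨mem_univ i, hS i hi⟩
    rw [Finset.mem_coe, mem_powersetCard]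
    refine ⟨fun i hi => ?_, by rw [card_sdiff_of_subset hsub, hc]⟩
    simp only [mem_sdiff] at hi
    simpa [mem_compl] using hi.2
  · intro U hU
    rw [Finset.mem_coe, mem_powersetCard] at hU
    have hdisj : Disjoint U S := by
      intro V hVU hVS i hi
      exact absurd (hU.1 (hVU hi)) (by simpa [mem_compl] using hVS hi)
    have key : univ.filter (fun i => decide (i ∈ U ∪ S) = true) = U ∪ S := by
      ext i; simp
    refine mem_filter.2 ⟨mem_univ _, ?_, fun i hi => by simp [mem_union, hi]⟩
    rw [key, card_union_of_disjoint hdisj, hU.2, Nat.sub_add_cancel hst]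
  · intro I hI
    obtain ⟨-, hc, hS⟩ := mem_filter.1 hI
    have hsub : S ⊆ univ.filter (fun i => I i = true) := fun i hi =>
      mem_filter.2 ⟨mem_univ i, hS i hi⟩
    funext i
    beta_reduce
    rw [sdiff_union_of_subset hsub]
    simp [mem_filter]
  · intro U hU
    rw [Finset.mem_coe, mem_powersetCard] at hU
    have hdisj : Disjoint S U := by
      intro V hVS hVU i hi
      exact absurd (hU.1 (hVU hi)) (by simpa [mem_compl] using hVS hi)
    have key : univ.filter (fun i => decide (i ∈ U ∪ S) = true) = U ∪ S := by
      ext i; simp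
    beta_reduce
    rw [key, union_sdiff_cancel_right hdisj.symm]

private lemma count_matrices (n σ m : ℕ) (t : Finset (Fin σ)) :
    (univ.filter (fun O : Fin n → Fin σ → Bool =>
        (univ.filter (fun p : Fin n × Fin σ => O p.1 p.2 = true)).card = m ∧
        ∀ j ∈ t, ∀ r, O r j = false)).card = (n * (σ - t.card)).choose m := by
  have hU : ((univ : Finset (Fin n)) ×ˢ tᶜ).card = n * (σ - t.card) := by
    rw [card_product, card_univ, Fintype.card_fin, card_compl, Fintype.card_fin]
  rw [← hU, ← card_powersetCard]
  apply card_nbij' (i := fun O => univ.filter (fun p : Fin n × Fin σ => O p.1 p.2 = true))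
    (j := fun T r c => decide ((r, c) ∈ T))
  · intro O hO
    obtain ⟨-, hc, hz⟩ := mem_filter.1 hO
    rw [Finset.mem_coe, mem_powersetCard]
    refine ⟨fun p hp => ?_, hc⟩
    obtain ⟨-, hp⟩ := mem_filter.1 hp
    refine mem_product.2 ⟨mem_univ _, mem_compl.2 fun hj => ?_⟩
    rw [hz p.2 hj p.1] at hp
    exact absurd hp (by simp)
  · intro T hT
    rw [Finset.mem_coe, mem_powersetCard] at hT
    have key : univ.filter (fun p : Fin n × Fin σ => decide ((p.1, p.2) ∈ T) = true) = T := by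
      ext p; simp
    refine mem_filter.2 ⟨mem_univ _, by rw [key]; exact hT.2, fun j hj r => ?_⟩
    simp only [decide_eq_false_iff_not]
    intro hmem
    exact absurd (mem_product.1 (hT.1 hmem)).2 (by simpa using hj)
  · intro O hO
    funext r c
    simp
  · intro T hT
    ext p; simp
open Finset

private lemma weight_eq_sum {n σ : ℕ} (O : Fin n → Fin σ → Bool) :
    (univ.filter (fun p : Fin n × Fin σ => O p.1 p.2 = true)).card
      = ∑ c : Fin σ, (univ.filter (fun r : Fin n => O r c = true)).card := by
  rw [card_filter, Fintype.sum_prod_type, Finset.sum_comm]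
  exact Finset.sum_congr rfl fun c _ => (card_filter _ _).symm

private lemma count_nozero (n σ m : ℕ) :
    ((univ.filter (fun O : Fin n → Fin σ → Bool =>
        (univ.filter (fun p : Fin n × Fin σ => O p.1 p.2 = true)).card = m ∧
        ∀ j : Fin σ, ∃ r : Fin n, O r j = true)).card : ℤ)
      = ∑ j ∈ Finset.range (σ + 1),
          (-1 : ℤ) ^ j * (σ.choose j) * ((n * (σ - j)).choose m) := by
  classical
  set S : Fin σ → Finset (Fin n → Fin σ → Bool) :=
    fun j => univ.filter (fun O => ∀ r, O r j = false) with hS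
  have hinf : ∀ (t : Finset (Fin σ)),
      t.inf S = univ.filter (fun O => ∀ j ∈ t, ∀ r, O r j = false) := by
    intro t
    induction t using Finset.induction with
    | empty => simp [Finset.inf_empty, Finset.top_eq_univ]
    | insert _ _ hx ih =>
      rw [inf_insert, ih, inf_eq_inter]
      ext O
      simp only [hS, mem_inter, mem_filter, mem_univ, true_and, mem_insert]
      constructor
      · rintro ⟨h1, h2⟩ j (rfl | hj) r
        · exact h1 r
        · exact h2 j hj r
      · intro h
        exact ⟨fun r => h _ (Or.inl rfl) r, fun j hj r => h j (Or.inr hj) r⟩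
  have hinfc : ∀ (t : Finset (Fin σ)),
      (t.inf fun i => (S i)ᶜ) = univ.filter (fun O => ∀ j ∈ t, ∃ r, O r j = true) := by
    intro t
    induction t using Finset.induction with
    | empty => simp [Finset.inf_empty, Finset.top_eq_univ]
    | insert _ _ hx ih =>
      rw [inf_insert, ih, inf_eq_inter]
      ext O
      simp only [hS, compl_filter, mem_inter, mem_filter, mem_univ, true_and, mem_insert,
        not_forall, Bool.not_eq_false]
      constructor
      · rintro ⟨h1, h2⟩ j (rfl | hj)
        · exact h1
        · exact h2 j hj
      · intro h
        exact ⟨h _ (Or.inl rfl), fun j hj => h j (Or.inr hj)⟩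
  have key := Finset.inclusion_exclusion_sum_inf_compl (G := ℤ) (univ : Finset (Fin σ)) S
    (fun O => if (univ.filter (fun p : Fin n × Fin σ => O p.1 p.2 = true)).card = m
      then (1 : ℤ) else 0)
  rw [hinfc] at key
  have hL : ∑ O ∈ univ.filter (fun O : Fin n → Fin σ → Bool => ∀ j ∈ univ, ∃ r, O r j = true),
      (if (univ.filter (fun p : Fin n × Fin σ => O p.1 p.2 = true)).card = m
        then (1 : ℤ) else 0)
      = ((univ.filter (fun O : Fin n → Fin σ → Bool =>
        (univ.filter (fun p : Fin n × Fin σ => O p.1 p.2 = true)).card = m ∧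
        ∀ j : Fin σ, ∃ r : Fin n, O r j = true)).card : ℤ) := by
    rw [Finset.sum_boole, Finset.filter_filter]
    norm_cast
    congr 1
    apply filter_congr
    intro O _
    simp [and_comm]
  rw [hL] at key
  rw [key]
  have hterm : ∀ t ∈ (univ : Finset (Fin σ)).powerset,
      ((-1 : ℤ) ^ t.card • ∑ O ∈ t.inf S,
        (if (univ.filter (fun p : Fin n × Fin σ => O p.1 p.2 = true)).card = m
          then (1 : ℤ) else 0))
      = (-1 : ℤ) ^ t.card * ((n * (σ - t.card)).choose m) := by
    intro t _
    rw [hinf t, Finset.sum_boole, Finset.filter_filter, smul_eq_mul]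
    congr 2
    rw [← count_matrices n σ m t]
    norm_cast
    congr 1
    apply filter_congr
    intro O _
    simp [and_comm]
  rw [Finset.sum_congr rfl hterm, Finset.sum_powerset]
  rw [card_univ, Fintype.card_fin]
  refine Finset.sum_congr rfl fun j hj => ?_
  have : ∀ t ∈ powersetCard j (univ : Finset (Fin σ)),
      (-1 : ℤ) ^ t.card * ((n * (σ - t.card)).choose m)
        = (-1 : ℤ) ^ j * ((n * (σ - j)).choose m) := by
    intro t ht
    rw [(mem_powersetCard.1 ht).2]
  rw [Finset.sum_congr rfl this, Finset.sum_const, card_powersetCard, card_univ,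
    Fintype.card_fin, nsmul_eq_mul]
  ring
theorem stmt_2 (n σ m : ℕ) (hn : 0 < n) (hσ : 0 < σ) (hm : 0 < m)
    (hσn : σ ≤ n - 1) (hnm : n - 1 ≤ m) (hmn : m ≤ n * σ) :
    ((Finset.univ.filter (fun OI : (Fin n → Fin σ → Bool) × (Fin m → Bool) =>
        -- O has exactly m ones
        (Finset.univ.filter (fun p : Fin n × Fin σ => OI.1 p.1 p.2 = true)).card = m ∧
        -- no all-zero column
        (∀ j : Fin σ, ∃ i : Fin n, OI.1 i j = true) ∧
        -- I has exactly n - 1 ones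
        (Finset.univ.filter (fun i : Fin m => OI.2 i = true)).card = n - 1 ∧
        -- forced ones at positions 1 + ∑_{k<j} ‖O_k‖ (zero-based: ∑_{k<j} ‖O_k‖)
        (∀ j : Fin σ, ∀ i : Fin m,
          (i : ℕ) = ∑ k ∈ Finset.univ.filter (fun k : Fin σ => k < j),
              (Finset.univ.filter (fun r : Fin n => OI.1 r k = true)).card →
          OI.2 i = true))).card : ℤ) =
      ((m - σ).choose (n - σ - 1) : ℤ) *
        ∑ j ∈ Finset.range (σ + 1),
          (-1 : ℤ) ^ j * (σ.choose j) * ((n * (σ - j)).choose m) := by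
  have h1 : (Finset.univ.filter (fun OI : (Fin n → Fin σ → Bool) × (Fin m → Bool) =>
        (Finset.univ.filter (fun p : Fin n × Fin σ => OI.1 p.1 p.2 = true)).card = m ∧
        (∀ j : Fin σ, ∃ i : Fin n, OI.1 i j = true) ∧
        (Finset.univ.filter (fun i : Fin m => OI.2 i = true)).card = n - 1 ∧
        (∀ j : Fin σ, ∀ i : Fin m,
          (i : ℕ) = ∑ k ∈ Finset.univ.filter (fun k : Fin σ => k < j),
              (Finset.univ.filter (fun r : Fin n => OI.1 r k = true)).card →
          OI.2 i = true))).card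
      = ∑ O : Fin n → Fin σ → Bool, (univ.filter (fun I : Fin m → Bool =>
        (Finset.univ.filter (fun p : Fin n × Fin σ => O p.1 p.2 = true)).card = m ∧
        (∀ j : Fin σ, ∃ i : Fin n, O i j = true) ∧
        (Finset.univ.filter (fun i : Fin m => I i = true)).card = n - 1 ∧
        (∀ j : Fin σ, ∀ i : Fin m,
          (i : ℕ) = ∑ k ∈ Finset.univ.filter (fun k : Fin σ => k < j),
              (Finset.univ.filter (fun r : Fin n => O r k = true)).card →
          I i = true))).card := by
    rw [card_filter, Fintype.sum_prod_type]
    exact Finset.sum_congr rfl fun O _ => (card_filter _ _).symm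
  have h2 : ∀ O : Fin n → Fin σ → Bool,
      (univ.filter (fun I : Fin m → Bool =>
        (Finset.univ.filter (fun p : Fin n × Fin σ => O p.1 p.2 = true)).card = m ∧
        (∀ j : Fin σ, ∃ i : Fin n, O i j = true) ∧
        (Finset.univ.filter (fun i : Fin m => I i = true)).card = n - 1 ∧
        (∀ j : Fin σ, ∀ i : Fin m,
          (i : ℕ) = ∑ k ∈ Finset.univ.filter (fun k : Fin σ => k < j),
              (Finset.univ.filter (fun r : Fin n => O r k = true)).card →
          I i = true))).card
      = if ((Finset.univ.filter (fun p : Fin n × Fin σ => O p.1 p.2 = true)).card = m ∧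
          ∀ j : Fin σ, ∃ r : Fin n, O r j = true) then (m - σ).choose (n - σ - 1) else 0 := by
    intro O
    by_cases hP : ((Finset.univ.filter (fun p : Fin n × Fin σ => O p.1 p.2 = true)).card = m ∧
          ∀ j : Fin σ, ∃ r : Fin n, O r j = true)
    · rw [if_pos hP]
      obtain ⟨hwm, hcol⟩ := hP
      have colpos : ∀ c : Fin σ, 0 < (univ.filter (fun r : Fin n => O r c = true)).card := by
        intro c
        obtain ⟨r, hr⟩ := hcol c
        exact card_pos.2 ⟨r, mem_filter.2 ⟨mem_univ r, hr⟩⟩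
      have hmono : ∀ j₁ j₂ : Fin σ, j₁ < j₂ →
          ∑ k ∈ univ.filter (fun k : Fin σ => k < j₁),
            (univ.filter (fun r : Fin n => O r k = true)).card
          < ∑ k ∈ univ.filter (fun k : Fin σ => k < j₂),
            (univ.filter (fun r : Fin n => O r k = true)).card := by
        intro j₁ j₂ h
        refine Finset.sum_lt_sum_of_subset ?_ (i := j₁) ?_ ?_ (colpos j₁) ?_
        · intro k hk
          simp only [mem_filter, mem_univ, true_and] at hk ⊢
          exact hk.trans h
        · simp [h]
        · simp
        · intro k _ _; exact Nat.zero_le _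
      have hlt : ∀ j : Fin σ,
          ∑ k ∈ univ.filter (fun k : Fin σ => k < j),
            (univ.filter (fun r : Fin n => O r k = true)).card < m := by
        intro j
        have hnotmem : j ∉ univ.filter (fun k : Fin σ => k < j) := by simp
        have hle : (univ.filter (fun r : Fin n => O r j = true)).card
            + ∑ k ∈ univ.filter (fun k : Fin σ => k < j),
              (univ.filter (fun r : Fin n => O r k = true)).card
            ≤ ∑ c : Fin σ, (univ.filter (fun r : Fin n => O r c = true)).card := by
          calc (univ.filter (fun r : Fin n => O r j = true)).card
              + ∑ k ∈ univ.filter (fun k : Fin σ => k < j),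
                (univ.filter (fun r : Fin n => O r k = true)).card
              = ∑ k ∈ insert j (univ.filter (fun k : Fin σ => k < j)),
                (univ.filter (fun r : Fin n => O r k = true)).card :=
                (Finset.sum_insert (f := fun k : Fin σ => (univ.filter (fun r : Fin n => O r k = true)).card) hnotmem).symm
            _ ≤ _ := Finset.sum_le_sum_of_subset (subset_univ _)
        calc ∑ k ∈ univ.filter (fun k : Fin σ => k < j),
              (univ.filter (fun r : Fin n => O r k = true)).card
            < (univ.filter (fun r : Fin n => O r j = true)).card
              + ∑ k ∈ univ.filter (fun k : Fin σ => k < j),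
                (univ.filter (fun r : Fin n => O r k = true)).card :=
              Nat.lt_add_of_pos_left (colpos j)
          _ ≤ ∑ c : Fin σ, (univ.filter (fun r : Fin n => O r c = true)).card := hle
          _ = m := by rw [← weight_eq_sum O]; exact hwm
      have hinj : Function.Injective (fun j : Fin σ =>
          (⟨∑ k ∈ univ.filter (fun k : Fin σ => k < j),
            (univ.filter (fun r : Fin n => O r k = true)).card, hlt j⟩ : Fin m)) := by
        intro a b hab
        simp only [Fin.mk.injEq] at hab
        by_contra hne
        rcases lt_or_gt_of_ne hne with h | h
        · exact absurd hab (Nat.ne_of_lt (hmono a b h))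
        · exact absurd hab.symm (Nat.ne_of_lt (hmono b a h))
      have hScard : (Finset.image (fun j : Fin σ =>
          (⟨∑ k ∈ univ.filter (fun k : Fin σ => k < j),
            (univ.filter (fun r : Fin n => O r k = true)).card, hlt j⟩ : Fin m)) univ).card
          = σ := by
        rw [Finset.card_image_of_injective _ hinj, card_univ, Fintype.card_fin]
      have hfilt : (univ.filter (fun I : Fin m → Bool =>
        (Finset.univ.filter (fun p : Fin n × Fin σ => O p.1 p.2 = true)).card = m ∧
        (∀ j : Fin σ, ∃ i : Fin n, O i j = true) ∧
        (Finset.univ.filter (fun i : Fin m => I i = true)).card = n - 1 ∧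
        (∀ j : Fin σ, ∀ i : Fin m,
          (i : ℕ) = ∑ k ∈ Finset.univ.filter (fun k : Fin σ => k < j),
              (Finset.univ.filter (fun r : Fin n => O r k = true)).card →
          I i = true)))
        = univ.filter (fun I : Fin m → Bool =>
            (univ.filter (fun i => I i = true)).card = n - 1 ∧
            ∀ i ∈ (Finset.image (fun j : Fin σ =>
              (⟨∑ k ∈ univ.filter (fun k : Fin σ => k < j),
                (univ.filter (fun r : Fin n => O r k = true)).card, hlt j⟩ : Fin m)) univ),
              I i = true) := by
        apply filter_congr
        intro I _
        constructor
        · rintro ⟨-, -, h3, h4⟩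
          refine ⟨h3, fun i hi => ?_⟩
          obtain ⟨j, -, rfl⟩ := Finset.mem_image.1 hi
          exact h4 j _ rfl
        · rintro ⟨h3, h4⟩
          refine ⟨hwm, hcol, h3, fun j i hi => ?_⟩
          exact h4 i (Finset.mem_image.2 ⟨j, mem_univ j, Fin.ext hi.symm⟩)
      rw [hfilt, count_forced (n - 1) _ (by rw [hScard]; exact hσn), hScard,
        Nat.sub_right_comm]
    · rw [if_neg hP, Finset.card_eq_zero, Finset.filter_eq_empty_iff]
      rintro I - ⟨hw1, hw2, -, -⟩
      exact hP ⟨hw1, hw2⟩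
  rw [h1, Finset.sum_congr rfl (fun O _ => h2 O), ← Finset.sum_filter,
    Finset.sum_const, smul_eq_mul]
  push_cast
  rw [count_nozero n σ m]
  ring
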